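/- Under Assumption: f ℓ-smooth, f(x,·) μ-strongly concave on convex Y, GDA with stepsizes η_x = 1/(16(κ+1)²ℓ) and η_y = 1/ℓ satisfies, with δ_t = ‖y*(x_t) − y_t‖² and Φ(x) = max_{y∈Y} f(x,y): Φ(x_t) ≤ Φ(x_{t−1}) − (7η_x/16)‖∇Φ(x_{t−1})‖² + (9η_x ℓ²/16) δ_{t−1}. -/

import Mathlib

open Set Filter
open scoped RealInnerProductSpace Topology

private lemma decr_aux {φ φ' : ℝ → ℝ} (hφ : ∀ s, HasDerivAt φ (φ' s) s)
    (h : ∀ s ∈ Set.Ioo (0:ℝ) 1, φ' s ≤ 0) : φ 1 ≤ φ 0 := by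
  have := antitoneOn_of_deriv_nonpos (convex_Icc (0:ℝ) 1)
    (fun s _ => (hφ s).continuousAt.continuousWithinAt)
    (fun s hs => ((hφ s).differentiableAt).differentiableWithinAt)
    (fun s hs => by rw [(hφ s).deriv]; exact h s (by simpa [interior_Icc] using hs))
  exact this (by norm_num) (by norm_num) zero_le_one

private lemma hasDerivAt_line {E : Type*} [NormedAddCommGroup E] [InnerProductSpace ℝ E]
    [CompleteSpace E] {f : E → ℝ} {g : E → E} (hg : ∀ p, HasGradientAt f (g p) p) (a d : E)
    (s : ℝ) : HasDerivAt (fun s : ℝ => f (a + s • d)) ⟪g (a + s • d), d⟫ s := by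
  have hline : HasDerivAt (fun s : ℝ => a + s • d) d s := by
    simpa using ((hasDerivAt_id s).smul_const d).const_add a
  have := (hg (a + s • d)).hasFDerivAt.comp_hasDerivAt s hline
  exact this

private lemma descent_aux {E : Type*} [NormedAddCommGroup E] [InnerProductSpace ℝ E]
    [CompleteSpace E] {f : E → ℝ} {g : E → E} (hg : ∀ p, HasGradientAt f (g p) p)
    {ℓ : ℝ} (hlip : ∀ p q, ‖g p - g q‖ ≤ ℓ * ‖p - q‖) (a d : E) :
    f (a + d) ≤ f a + ⟪g a, d⟫ + ℓ / 2 * ‖d‖ ^ 2 := by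
  set φ : ℝ → ℝ := fun s => f (a + s • d) - s * ⟪g a, d⟫ - ℓ / 2 * s ^ 2 * ‖d‖ ^ 2 with hφdef
  have hder : ∀ s : ℝ, HasDerivAt φ
      (⟪g (a + s • d), d⟫ - ⟪g a, d⟫ - ℓ * s * ‖d‖ ^ 2) s := by
    intro s
    have h1 := hasDerivAt_line hg a d s
    have h2 : HasDerivAt (fun s : ℝ => s * ⟪g a, d⟫) ⟪g a, d⟫ s := hasDerivAt_mul_const _
    have h3 : HasDerivAt (fun s : ℝ => ℓ / 2 * s ^ 2 * ‖d‖ ^ 2) (ℓ * s * ‖d‖ ^ 2) s := by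
      have := ((hasDerivAt_pow 2 s).const_mul (ℓ / 2)).mul_const (‖d‖ ^ 2)
      convert this using 1; rfl; rfl; ring
    exact (h1.sub h2).sub h3
  have hbound : ∀ s ∈ Set.Ioo (0:ℝ) 1,
      ⟪g (a + s • d), d⟫ - ⟪g a, d⟫ - ℓ * s * ‖d‖ ^ 2 ≤ 0 := by
    intro s hs
    have h1 : ⟪g (a + s • d) - g a, d⟫ ≤ ‖g (a + s • d) - g a‖ * ‖d‖ := real_inner_le_norm _ _
    have h2 : ‖g (a + s • d) - g a‖ ≤ ℓ * (s * ‖d‖) := by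
      have := hlip (a + s • d) a
      simpa [norm_smul, abs_of_pos hs.1, mul_assoc] using this
    have h3 : ⟪g (a + s • d) - g a, d⟫ ≤ ℓ * (s * ‖d‖) * ‖d‖ :=
      h1.trans (mul_le_mul_of_nonneg_right h2 (norm_nonneg _))
    rw [inner_sub_left] at h3
    nlinarith [sq_nonneg ‖d‖]
  have := decr_aux hder hbound
  simp only [hφdef, one_smul, one_pow, one_mul, zero_smul, add_zero, zero_pow, zero_mul,
    mul_zero, sub_zero] at this
  linarith

private lemma diff_aux {E : Type*} [NormedAddCommGroup E] [InnerProductSpace ℝ E]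
    [CompleteSpace E] {f1 f2 : E → ℝ} {g1 g2 : E → E}
    (h1 : ∀ p, HasGradientAt f1 (g1 p) p) (h2 : ∀ p, HasGradientAt f2 (g2 p) p)
    {C : ℝ} (hC : ∀ p, ‖g1 p - g2 p‖ ≤ C) (a b : E) :
    (f1 b - f2 b) - (f1 a - f2 a) ≤ C * ‖b - a‖ := by
  set d := b - a with hd
  set φ : ℝ → ℝ := fun s => f1 (a + s • d) - f2 (a + s • d) - s * (C * ‖d‖) with hφdef
  have hder : ∀ s : ℝ, HasDerivAt φ
      (⟪g1 (a + s • d), d⟫ - ⟪g2 (a + s • d), d⟫ - C * ‖d‖) s := by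
    intro s
    have e1 := hasDerivAt_line h1 a d s
    have e2 := hasDerivAt_line h2 a d s
    have e3 : HasDerivAt (fun s : ℝ => s * (C * ‖d‖)) (C * ‖d‖) s := hasDerivAt_mul_const _
    exact (e1.sub e2).sub e3
  have hbound : ∀ s ∈ Set.Ioo (0:ℝ) 1,
      ⟪g1 (a + s • d), d⟫ - ⟪g2 (a + s • d), d⟫ - C * ‖d‖ ≤ 0 := by
    intro s _
    have q1 : ⟪g1 (a + s • d) - g2 (a + s • d), d⟫ ≤ ‖g1 (a + s • d) - g2 (a + s • d)‖ * ‖d‖ :=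
      real_inner_le_norm _ _
    have q2 : ‖g1 (a + s • d) - g2 (a + s • d)‖ * ‖d‖ ≤ C * ‖d‖ :=
      mul_le_mul_of_nonneg_right (hC _) (norm_nonneg _)
    rw [inner_sub_left] at q1
    linarith
  have := decr_aux hder hbound
  simp only [hφdef, one_smul, zero_smul, add_zero, zero_mul, sub_zero, one_mul] at this
  have hb : a + d = b := by rw [hd]; abel
  rw [hb] at this
  linarith

private lemma growth_aux {E : Type*} [NormedAddCommGroup E] [InnerProductSpace ℝ E]
    {Y : Set E} {μ : ℝ} {f : E → ℝ} (hf : StrongConcaveOn Y μ f)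
    {y1 : E} (hy1 : y1 ∈ Y) (hmax : IsMaxOn f Y y1) {y : E} (hy : y ∈ Y) :
    f y + μ / 2 * ‖y - y1‖ ^ 2 ≤ f y1 := by
  set c : ℝ := μ / 2 * ‖y - y1‖ ^ 2 with hc
  have key : ∀ t ∈ Set.Ioo (0:ℝ) 1, f y + (1 - t) * c ≤ f y1 := by
    intro t ht
    have hmem : t • y + (1 - t) • y1 ∈ Y := hf.1 hy hy1 ht.1.le (by linarith [ht.2]) (by ring)
    have h1 : t • f y + (1 - t) • f y1 + t * (1 - t) * (μ / 2 * ‖y - y1‖ ^ 2)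
        ≤ f (t • y + (1 - t) • y1) := hf.2 hy hy1 ht.1.le (by linarith [ht.2]) (by ring)
    have h2 : f (t • y + (1 - t) • y1) ≤ f y1 := hmax hmem
    have h3 : t * (f y + (1 - t) * c) ≤ t * f y1 := by
      simp only [smul_eq_mul, ← hc] at h1
      have h4 := h1.trans h2
      nlinarith [h4]
    exact le_of_mul_le_mul_left h3 ht.1
  have hTt : Tendsto (fun t : ℝ => f y + (1 - t) * c) (𝓝[>] (0:ℝ)) (𝓝 (f y + c)) := by
    have : Tendsto (fun t : ℝ => f y + (1 - t) * c) (𝓝 (0:ℝ)) (𝓝 (f y + (1 - 0) * c)) := by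
      apply Continuous.tendsto; continuity
    simpa using this.mono_left nhdsWithin_le_nhds
  have hev : ∀ᶠ t in 𝓝[>] (0:ℝ), f y + (1 - t) * c ≤ f y1 := by
    filter_upwards [Ioo_mem_nhdsGT_of_mem (by constructor <;> norm_num : (0:ℝ) ∈ Set.Ico (0:ℝ) 1)]
      with t ht using key t ht
  exact le_of_tendsto hTt hev

set_option maxHeartbeats 1000000 in
/-- Descent inequality for two-time-scale GDA with stepsizes
`η_x = 1/(16(κ+1)²ℓ)`, `η_y = 1/ℓ`, `κ = ℓ/μ`: with `δ_t = ‖y*(x_t) − y_t‖²` and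
`Φ(x) = max_{y∈Y} f x y`,
`Φ(x_t) ≤ Φ(x_{t−1}) − (7η_x/16)‖∇Φ(x_{t−1})‖² + (9η_x ℓ²/16) δ_{t−1}`. -/
theorem statement10 {m n : ℕ} (f : EuclideanSpace ℝ (Fin m) → EuclideanSpace ℝ (Fin n) → ℝ)
    (ℓ μ ηx : ℝ) (hℓ : 0 < ℓ) (hμ : 0 < μ) (hκ : 1 ≤ ℓ / μ)
    (hηx : ηx = 1 / (16 * (ℓ / μ + 1) ^ 2 * ℓ))
    (Y : Set (EuclideanSpace ℝ (Fin n))) (hYconv : Convex ℝ Y) (hYclosed : IsClosed Y)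
    (hYbdd : Bornology.IsBounded Y) (hYne : Y.Nonempty)
    (gx : EuclideanSpace ℝ (Fin m) → EuclideanSpace ℝ (Fin n) → EuclideanSpace ℝ (Fin m))
    (gy : EuclideanSpace ℝ (Fin m) → EuclideanSpace ℝ (Fin n) → EuclideanSpace ℝ (Fin n))
    (hgx : ∀ x y, HasGradientAt (fun x' => f x' y) (gx x y) x)
    (hgy : ∀ x y, HasGradientAt (fun y' => f x y') (gy x y) y)
    (hsmooth : ∀ x x' y y',
      ‖gx x y - gx x' y'‖ ≤ ℓ * (‖x - x'‖ + ‖y - y'‖) ∧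
      ‖gy x y - gy x' y'‖ ≤ ℓ * (‖x - x'‖ + ‖y - y'‖))
    (hconc : ∀ x, StrongConcaveOn Y μ (f x))
    (P : EuclideanSpace ℝ (Fin n) → EuclideanSpace ℝ (Fin n))
    (hP : ∀ z, P z ∈ Y ∧ ∀ y ∈ Y, ⟪z - P z, y - P z⟫ ≤ 0)
    (ystar : EuclideanSpace ℝ (Fin m) → EuclideanSpace ℝ (Fin n))
    (hystar : ∀ x, ystar x ∈ Y ∧ IsMaxOn (f x) Y (ystar x))
    (Φ : EuclideanSpace ℝ (Fin m) → ℝ) (hΦ : ∀ x, Φ x = sSup (f x '' Y))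
    (x : ℕ → EuclideanSpace ℝ (Fin m)) (y : ℕ → EuclideanSpace ℝ (Fin n))
    (hy0 : y 0 ∈ Y)
    (hxupd : ∀ t, x (t + 1) = x t - ηx • gx (x t) (y t))
    (hyupd : ∀ t, y (t + 1) = P (y t + (1 / ℓ) • gy (x t) (y t))) :
    ∀ t, Φ (x (t + 1)) ≤ Φ (x t) - (7 * ηx / 16) * ‖gx (x t) (ystar (x t))‖ ^ 2
        + (9 * ηx * ℓ ^ 2 / 16) * ‖ystar (x t) - y t‖ ^ 2 := by
  have hηpos : 0 < ηx := by
    rw [hηx]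
    have : (0:ℝ) < ℓ / μ + 1 := by linarith
    positivity
  have hΦeq : ∀ p, Φ p = f p (ystar p) := by
    intro p
    rw [hΦ p]
    apply IsGreatest.csSup_eq
    refine ⟨mem_image_of_mem _ (hystar p).1, ?_⟩
    rintro v ⟨w, hw, rfl⟩
    exact (hystar p).2 hw
  have hLip : ∀ a b : EuclideanSpace ℝ (Fin m),
      ‖ystar a - ystar b‖ ≤ ℓ / μ * ‖a - b‖ := by
    intro a b
    rcases eq_or_lt_of_le (norm_nonneg (ystar a - ystar b)) with h0 | h0
    · rw [← h0]; positivity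
    have g1 : f a (ystar b) + μ / 2 * ‖ystar b - ystar a‖ ^ 2 ≤ f a (ystar a) :=
      growth_aux (hconc a) (hystar a).1 (hystar a).2 (hystar b).1
    have g2 : f b (ystar a) + μ / 2 * ‖ystar a - ystar b‖ ^ 2 ≤ f b (ystar b) :=
      growth_aux (hconc b) (hystar b).1 (hystar b).2 (hystar a).1
    have hdiff : (f a (ystar a) - f a (ystar b)) - (f b (ystar a) - f b (ystar b))
        ≤ ℓ * ‖ystar a - ystar b‖ * ‖a - b‖ :=
      diff_aux (fun p => hgx p (ystar a)) (fun p => hgx p (ystar b))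
        (fun p => by simpa using (hsmooth p p (ystar a) (ystar b)).1) b a
    have hrev : ‖ystar b - ystar a‖ = ‖ystar a - ystar b‖ := norm_sub_rev _ _
    rw [hrev] at g1
    have hmq : μ * ‖ystar a - ystar b‖ * ‖ystar a - ystar b‖
        ≤ ℓ * ‖a - b‖ * ‖ystar a - ystar b‖ := by nlinarith [g1, g2, hdiff]
    have h5 : μ * ‖ystar a - ystar b‖ ≤ ℓ * ‖a - b‖ := le_of_mul_le_mul_right hmq h0
    rw [div_mul_eq_mul_div, le_div_iff₀ hμ]
    linarith [h5]
  intro t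
  set a := x t with ha
  set g := gx a (ystar a) with hgdef
  set h := gx a (y t) with hhdef
  set d : EuclideanSpace ℝ (Fin m) := -(ηx • h) with hd
  have hbd : x (t + 1) = a + d := by
    rw [hxupd t, hd, sub_eq_add_neg]
  set b := x (t + 1) with hb
  set yh := ystar b with hyh
  -- descent along x
  have hdesc : f b yh ≤ f a yh + ⟪gx a yh, d⟫ + ℓ / 2 * ‖d‖ ^ 2 := by
    rw [hbd]
    exact descent_aux (fun p => hgx p yh)
      (fun p q => by simpa using (hsmooth p q yh yh).1) a d
  have hmax1 : f a yh ≤ f a (ystar a) := (hystar a).2 (hystar b).1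
  -- inner product error term
  have hba : ‖b - a‖ = ‖d‖ := by rw [hbd]; simp
  have c2 : ‖gx a yh - g‖ ≤ ℓ * ‖yh - ystar a‖ := by
    simpa using (hsmooth a a yh (ystar a)).1
  have c3 : ‖yh - ystar a‖ ≤ ℓ / μ * ‖d‖ := by
    have := hLip b a
    rw [hba] at this
    exact this
  have c4 : ‖gx a yh - g‖ ≤ ℓ * (ℓ / μ * ‖d‖) :=
    c2.trans (mul_le_mul_of_nonneg_left c3 hℓ.le)
  have hiner : ⟪gx a yh, d⟫ - ⟪g, d⟫ ≤ ℓ * (ℓ / μ) * ‖d‖ ^ 2 := by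
    have c1 : ⟪gx a yh - g, d⟫ ≤ ‖gx a yh - g‖ * ‖d‖ := real_inner_le_norm _ _
    have c5 : ‖gx a yh - g‖ * ‖d‖ ≤ ℓ * (ℓ / μ * ‖d‖) * ‖d‖ :=
      mul_le_mul_of_nonneg_right c4 (norm_nonneg _)
    rw [inner_sub_left] at c1
    have : ℓ * (ℓ / μ * ‖d‖) * ‖d‖ = ℓ * (ℓ / μ) * ‖d‖ ^ 2 := by ring
    linarith [c1.trans c5, this.le]
  have T1 : Φ b ≤ Φ a + ⟪g, d⟫ + (ℓ * (ℓ / μ) + ℓ / 2) * ‖d‖ ^ 2 := by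
    rw [hΦeq b, hΦeq a]
    have : (ℓ * (ℓ / μ) + ℓ / 2) * ‖d‖ ^ 2 = ℓ * (ℓ / μ) * ‖d‖ ^ 2 + ℓ / 2 * ‖d‖ ^ 2 := by ring
    rw [this]
    linarith [hdesc, hmax1, hiner]
  -- inner product with gradient
  have hGd : ⟪g, d⟫ = -(ηx * ⟪g, h⟫) := by
    rw [hd, inner_neg_right, real_inner_smul_right]
  have hgh : ‖g‖ ^ 2 - ‖g‖ * ‖h - g‖ ≤ ⟪g, h⟫ := by
    have e0 : ⟪g, h⟫ = ‖g‖ ^ 2 + ⟪g, h - g⟫ := by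
      rw [inner_sub_right, real_inner_self_eq_norm_sq]; ring
    have e1 := abs_real_inner_le_norm g (h - g)
    rw [e0]
    have := neg_abs_le ⟪g, h - g⟫
    linarith
  have T2 : ⟪g, d⟫ ≤ -(ηx * ‖g‖ ^ 2) + ηx / 2 * ‖g‖ ^ 2 + ηx / 2 * ‖h - g‖ ^ 2 := by
    rw [hGd]
    have u1 : ηx * (‖g‖ ^ 2 - ‖g‖ * ‖h - g‖) ≤ ηx * ⟪g, h⟫ :=
      mul_le_mul_of_nonneg_left hgh hηpos.le
    have u2 : 0 ≤ ηx * (‖g‖ - ‖h - g‖) ^ 2 := mul_nonneg hηpos.le (sq_nonneg _)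
    nlinarith [u1, u2]
  -- step size bound
  have hkey : (ℓ / μ + 1) * ℓ * ηx ≤ 1 / 32 := by
    rw [hηx]
    have hpos : (0:ℝ) < ℓ / μ + 1 := by linarith
    have heq : (ℓ / μ + 1) * ℓ * (1 / (16 * (ℓ / μ + 1) ^ 2 * ℓ)) = 1 / (16 * (ℓ / μ + 1)) := by
      field_simp
    rw [heq]
    have : (32:ℝ) ≤ 16 * (ℓ / μ + 1) := by linarith
    exact one_div_le_one_div_of_le (by norm_num) this
  have hq : (ℓ * (ℓ / μ) + ℓ / 2) * ηx ≤ 1 / 32 := by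
    have u := mul_nonneg hℓ.le hηpos.le
    nlinarith [hkey, u]
  -- bound on ‖d‖²
  have hdn : ‖d‖ = ηx * ‖h‖ := by
    rw [hd, norm_neg, norm_smul, Real.norm_eq_abs, abs_of_pos hηpos]
  have hhn : ‖h‖ ≤ ‖g‖ + ‖h - g‖ := by
    have := norm_add_le g (h - g)
    simpa using this
  have hD2 : ‖d‖ ^ 2 ≤ ηx ^ 2 * (‖g‖ + ‖h - g‖) ^ 2 := by
    rw [hdn]
    have h2 : ‖h‖ ^ 2 ≤ (‖g‖ + ‖h - g‖) ^ 2 := by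
      apply pow_le_pow_left₀ (norm_nonneg _) hhn
    calc (ηx * ‖h‖) ^ 2 = ηx ^ 2 * ‖h‖ ^ 2 := by ring
      _ ≤ ηx ^ 2 * (‖g‖ + ‖h - g‖) ^ 2 := mul_le_mul_of_nonneg_left h2 (sq_nonneg ηx)
  have T3 : (ℓ * (ℓ / μ) + ℓ / 2) * ‖d‖ ^ 2 ≤ ηx / 16 * ‖g‖ ^ 2 + ηx / 16 * ‖h - g‖ ^ 2 := by
    have p1 : (0:ℝ) ≤ ℓ * (ℓ / μ) + ℓ / 2 := by positivity
    have r1 : (ℓ * (ℓ / μ) + ℓ / 2) * ‖d‖ ^ 2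
        ≤ (ℓ * (ℓ / μ) + ℓ / 2) * (ηx ^ 2 * (‖g‖ + ‖h - g‖) ^ 2) :=
      mul_le_mul_of_nonneg_left hD2 p1
    have r2 : (ℓ * (ℓ / μ) + ℓ / 2) * (ηx ^ 2 * (‖g‖ + ‖h - g‖) ^ 2)
        = ((ℓ * (ℓ / μ) + ℓ / 2) * ηx) * (ηx * (‖g‖ + ‖h - g‖) ^ 2) := by ring
    have r3 : ((ℓ * (ℓ / μ) + ℓ / 2) * ηx) * (ηx * (‖g‖ + ‖h - g‖) ^ 2)
        ≤ (1 / 32) * (ηx * (‖g‖ + ‖h - g‖) ^ 2) := by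
      apply mul_le_mul_of_nonneg_right hq
      positivity
    have r4 : (1 / 32) * (ηx * (‖g‖ + ‖h - g‖) ^ 2)
        ≤ ηx / 16 * ‖g‖ ^ 2 + ηx / 16 * ‖h - g‖ ^ 2 := by
      nlinarith [mul_nonneg hηpos.le (sq_nonneg (‖g‖ - ‖h - g‖))]
    linarith [r1, r2.le, r3, r4]
  -- error bound
  have hE : ‖h - g‖ ≤ ℓ * ‖ystar a - y t‖ := by
    have h1 := (hsmooth a a (y t) (ystar a)).1
    have h2 : ‖y t - ystar a‖ = ‖ystar a - y t‖ := norm_sub_rev _ _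
    calc ‖h - g‖ ≤ ℓ * (‖a - a‖ + ‖y t - ystar a‖) := h1
      _ = ℓ * ‖ystar a - y t‖ := by rw [h2]; simp
  have hEn2 : ‖h - g‖ ^ 2 ≤ ℓ ^ 2 * ‖ystar a - y t‖ ^ 2 := by
    have := pow_le_pow_left₀ (norm_nonneg (h - g)) hE 2
    calc ‖h - g‖ ^ 2 ≤ (ℓ * ‖ystar a - y t‖) ^ 2 := this
      _ = ℓ ^ 2 * ‖ystar a - y t‖ ^ 2 := by ring
  have T4 : 9 * ηx / 16 * ‖h - g‖ ^ 2 ≤ 9 * ηx / 16 * (ℓ ^ 2 * ‖ystar a - y t‖ ^ 2) :=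
    mul_le_mul_of_nonneg_left hEn2 (by positivity)
  linarith [T1, T2, T3, T4]
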